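/- Let n ≥ 1, n ≤ p ≤ 2n-2, and d = gcd(p, 2n-1). Then the characteristic polynomial of (1/2)·M^p (where M is the matrix of quantum multiplication by τ₁ on H•(OG(1,2n+1))) equals λ·(λ^{(2n-1)/d} - 2^{(2p-(2n-1))/d})^d. -/

import Mathlib

open Matrix Polynomial

/-- The matrix of quantum multiplication by τ₁ on H•(OG(1,2n+1)):
M[i+1][i] = 1 for 0 ≤ i ≤ 2n-2 except M[n][n-1] = 2, M[0][2n-2] = 1,
M[1][2n-1] = 1, all other entries zero. -/
def M (n : ℕ) : Matrix (Fin (2*n)) (Fin (2*n)) ℂ :=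
  Matrix.of fun i j =>
    if (i : ℕ) = (j : ℕ) + 1 then (if (i : ℕ) = n then 2 else 1)
    else if (i : ℕ) = 0 ∧ (j : ℕ) = 2*n - 2 then 1
    else if (i : ℕ) = 1 ∧ (j : ℕ) = 2*n - 1 then 1
    else 0

open Finset

namespace OGAux
noncomputable section

def om (n : ℕ) : ℂ := Complex.exp (2 * Real.pi * Complex.I / (2*n-1 : ℕ))
def rr (n : ℕ) : ℝ := (2:ℝ) ^ (((2*n-1 : ℕ):ℝ))⁻¹
def nu (n t : ℕ) : ℂ := (rr n : ℂ)^2 * (om n)^t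
def mC (n : ℕ) : ℂ := ((2*n-1 : ℕ) : ℂ)

def Pf (n i k : ℕ) : ℂ :=
  if k = 0 then (if i = 0 then 1 else if i = 2*n-1 then -1 else 0)
  else if i = 0 ∨ i = 2*n-1 then 2
  else (if n ≤ i then 2 else 1) * (nu n (k-1))^(2*n-1 - i)

def Qf (n k j : ℕ) : ℂ :=
  if k = 0 then (if j = 0 then 1/2 else if j = 2*n-1 then -(1/2) else 0)
  else if j = 0 ∨ j = 2*n-1 then 1/(4*(mC n))
  else (nu n (k-1))^j / ((if n ≤ j then 2 else 1) * (4*(mC n)))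

def Pm (n : ℕ) : Matrix (Fin (2*n)) (Fin (2*n)) ℂ := Matrix.of fun i k => Pf n (i:ℕ) (k:ℕ)
def Qm (n : ℕ) : Matrix (Fin (2*n)) (Fin (2*n)) ℂ := Matrix.of fun k j => Qf n (k:ℕ) (j:ℕ)

variable {n : ℕ}

lemma m_ne (hn : 2 ≤ n) : 2*n-1 ≠ 0 := by omega
lemma om_prim (hn : 2 ≤ n) : IsPrimitiveRoot (om n) (2*n-1) :=
  Complex.isPrimitiveRoot_exp _ (m_ne hn)
lemma om_pow_m (hn : 2 ≤ n) : (om n)^(2*n-1) = 1 := (om_prim hn).pow_eq_one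
lemma rr_pow_m (hn : 2 ≤ n) : ((rr n : ℂ))^(2*n-1) = 2 := by
  have h : (rr n)^(2*n-1) = 2 := Real.rpow_inv_natCast_pow (by norm_num) (m_ne hn)
  calc ((rr n : ℂ))^(2*n-1) = (((rr n)^(2*n-1) : ℝ) : ℂ) := by push_cast; ring
    _ = 2 := by rw [h]; norm_num
lemma nu_pow_m (hn : 2 ≤ n) (t : ℕ) : (nu n t)^(2*n-1) = 4 := by
  have h2 : ((rr n : ℂ))^(2*n-1) = 2 := rr_pow_m hn
  calc (nu n t)^(2*n-1) = ((rr n : ℂ)^(2*n-1))^2 * (((om n)^(2*n-1))^t) := by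
        rw [nu, mul_pow, ← pow_mul, ← pow_mul, ← pow_mul, ← pow_mul]; ring_nf
    _ = 4 := by rw [h2, om_pow_m hn]; norm_num
lemma om_ne_zero (hn : 2 ≤ n) : om n ≠ 0 := by
  intro h
  have h1 := om_pow_m hn
  rw [h, zero_pow (m_ne hn)] at h1
  norm_num at h1
lemma mC_ne_zero (hn : 2 ≤ n) : mC n ≠ 0 := Nat.cast_ne_zero.mpr (m_ne hn)

lemma nu_cross (hn : 2 ≤ n) {t t' a : ℕ} (ha : a ≤ 2*n-1) :
    nu n t ^ a * nu n t' ^ (2*n-1 - a) = 4 * ((om n)^t / (om n)^t')^a := by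
  have h1 : ((rr n:ℂ)^2)^a * ((rr n:ℂ)^2)^(2*n-1-a) = 4 := by
    rw [← pow_add, Nat.add_sub_cancel' ha, pow_right_comm, rr_pow_m hn]
    norm_num
  have h2 : ((om n)^t')^(2*n-1-a) * ((om n)^t')^a = 1 := by
    rw [← pow_add, Nat.sub_add_cancel ha, pow_right_comm, om_pow_m hn, one_pow]
  have h3 : ((om n)^t')^(2*n-1-a) = (((om n)^t')^a)⁻¹ := eq_inv_of_mul_eq_one_left h2
  rw [nu, nu, mul_pow, mul_pow, div_pow, h3, div_eq_mul_inv]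
  linear_combination (((om n)^t)^a * (((om n)^t')^a)⁻¹) * h1

-- entry evaluation helpers
lemma Pf_00 : Pf n 0 0 = 1 := by rw [Pf, if_pos rfl, if_pos rfl]
lemma Pf_last0 (hn : 2 ≤ n) : Pf n (2*n-1) 0 = -1 := by
  rw [Pf, if_pos rfl, if_neg (by omega : ¬(2*n-1 = 0)), if_pos rfl]
lemma Pf_mid0 (hn : 2 ≤ n) {i : ℕ} (h1 : i ≠ 0) (h2 : i ≠ 2*n-1) : Pf n i 0 = 0 := by
  rw [Pf, if_pos rfl, if_neg h1, if_neg h2]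
lemma Pf_0k {k : ℕ} (hk : k ≠ 0) : Pf n 0 k = 2 := by
  rw [Pf, if_neg hk, if_pos (Or.inl rfl)]
lemma Pf_lastk {k : ℕ} (hk : k ≠ 0) : Pf n (2*n-1) k = 2 := by
  rw [Pf, if_neg hk, if_pos (Or.inr rfl)]
lemma Pf_midk {i k : ℕ} (hk : k ≠ 0) (h1 : i ≠ 0) (h2 : i ≠ 2*n-1) :
    Pf n i k = (if n ≤ i then 2 else 1) * (nu n (k-1))^(2*n-1 - i) := by
  rw [Pf, if_neg hk, if_neg (by tauto)]
lemma Qf_00 : Qf n 0 0 = 1/2 := by rw [Qf, if_pos rfl, if_pos rfl]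
lemma Qf_0last (hn : 2 ≤ n) : Qf n 0 (2*n-1) = -(1/2) := by
  rw [Qf, if_pos rfl, if_neg (by omega : ¬(2*n-1 = 0)), if_pos rfl]
lemma Qf_0mid (hn : 2 ≤ n) {j : ℕ} (h1 : j ≠ 0) (h2 : j ≠ 2*n-1) : Qf n 0 j = 0 := by
  rw [Qf, if_pos rfl, if_neg h1, if_neg h2]
lemma Qf_k0 {k : ℕ} (hk : k ≠ 0) : Qf n k 0 = 1/(4*(mC n)) := by
  rw [Qf, if_neg hk, if_pos (Or.inl rfl)]
lemma Qf_klast {k : ℕ} (hk : k ≠ 0) : Qf n k (2*n-1) = 1/(4*(mC n)) := by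
  rw [Qf, if_neg hk, if_pos (Or.inr rfl)]
lemma Qf_kmid {k j : ℕ} (hk : k ≠ 0) (h1 : j ≠ 0) (h2 : j ≠ 2*n-1) :
    Qf n k j = (nu n (k-1))^j / ((if n ≤ j then 2 else 1) * (4*(mC n))) := by
  rw [Qf, if_neg hk, if_neg (by tauto)]

lemma split3 (f : ℕ → ℂ) (N : ℕ) :
    ∑ j ∈ range (N+2), f j = (f 0 + ∑ j ∈ range N, f (j+1)) + f (N+1) := by
  rw [Finset.sum_range_succ, Finset.sum_range_succ']; ring

lemma geo (hn : 2 ≤ n) {z : ℂ} (hz1 : z^(2*n-1) = 1) (hz : z ≠ 1) :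
    ∑ j ∈ range (2*n-1), z^j = 0 := by
  rw [geom_sum_eq hz, hz1, sub_self, zero_div]

lemma QP (hn : 2 ≤ n) : Qm n * Pm n = 1 := by
  have hmC := mC_ne_zero hn
  have hom := om_ne_zero hn
  ext k k'
  rw [Matrix.mul_apply, Matrix.one_apply]
  simp only [Qm, Pm, Matrix.of_apply]
  rw [Fin.sum_univ_eq_sum_range (fun j => Qf n (k:ℕ) j * Pf n j (k':ℕ)) (2*n)]
  have hK : (k:ℕ) < 2*n := k.2
  have hK' : (k':ℕ) < 2*n := k'.2
  have hs := split3 (fun j => Qf n (k:ℕ) j * Pf n j (k':ℕ)) (2*n-2)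
  rw [show (2*n-2)+2 = 2*n by omega, show (2*n-2)+1 = 2*n-1 by omega] at hs
  rw [hs]
  by_cases hk0 : (k:ℕ) = 0
  · have hmid : ∀ j ∈ range (2*n-2), Qf n (k:ℕ) (j+1) * Pf n (j+1) (k':ℕ) = 0 := by
      intro j hj
      rw [mem_range] at hj
      rw [hk0, Qf_0mid hn (by omega) (by omega), zero_mul]
    rw [Finset.sum_congr rfl hmid, Finset.sum_const, smul_zero, hk0]
    by_cases hk'0 : (k':ℕ) = 0
    · rw [if_pos (Fin.ext (hk0.trans hk'0.symm)), hk'0, Qf_00, Qf_0last hn, Pf_00, Pf_last0 hn]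
      norm_num
    · rw [if_neg (fun h => hk'0 ((congrArg Fin.val h) ▸ hk0)), Qf_00, Qf_0last hn,
        Pf_0k hk'0, Pf_lastk hk'0]
      norm_num
  · by_cases hk'0 : (k':ℕ) = 0
    · have hmid : ∀ j ∈ range (2*n-2), Qf n (k:ℕ) (j+1) * Pf n (j+1) (k':ℕ) = 0 := by
        intro j hj
        rw [mem_range] at hj
        rw [hk'0, Pf_mid0 hn (by omega) (by omega), mul_zero]
      rw [Finset.sum_congr rfl hmid, Finset.sum_const, smul_zero, hk'0]
      rw [if_neg (fun h => hk0 ((congrArg Fin.val h).symm ▸ hk'0)), Qf_k0 hk0, Qf_klast hk0,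
        Pf_00, Pf_last0 hn]
      norm_num
    · -- main case
      have hmid : ∀ j ∈ range (2*n-2), Qf n (k:ℕ) (j+1) * Pf n (j+1) (k':ℕ) =
          (mC n)⁻¹ * ((om n)^((k:ℕ)-1) / (om n)^((k':ℕ)-1))^(j+1) := by
        intro j hj
        rw [mem_range] at hj
        rw [Qf_kmid hk0 (by omega) (by omega), Pf_midk hk'0 (by omega) (by omega)]
        have hcross := nu_cross hn (t := (k:ℕ)-1) (t' := (k':ℕ)-1) (a := j+1)
          (by omega : j+1 ≤ 2*n-1)
        have hW : (if n ≤ j+1 then (2:ℂ) else 1) ≠ 0 := by split_ifs <;> norm_num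
        calc (nu n ((k:ℕ)-1))^(j+1) / ((if n ≤ j+1 then (2:ℂ) else 1) * (4*(mC n))) *
              ((if n ≤ j+1 then (2:ℂ) else 1) * (nu n ((k':ℕ)-1))^(2*n-1-(j+1)))
            = ((nu n ((k:ℕ)-1))^(j+1) * (nu n ((k':ℕ)-1))^(2*n-1-(j+1))) *
              ((if n ≤ j+1 then (2:ℂ) else 1) / ((if n ≤ j+1 then (2:ℂ) else 1) * (4*(mC n)))) := by
              ring
          _ = (4 * ((om n)^((k:ℕ)-1) / (om n)^((k':ℕ)-1))^(j+1)) *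
              ((if n ≤ j+1 then (2:ℂ) else 1) / ((if n ≤ j+1 then (2:ℂ) else 1) * (4*(mC n)))) := by
              rw [hcross]
          _ = (mC n)⁻¹ * ((om n)^((k:ℕ)-1) / (om n)^((k':ℕ)-1))^(j+1) := by
              by_cases hw : n ≤ j+1
              · rw [if_pos hw]; field_simp
              · rw [if_neg hw]; field_simp
      rw [Finset.sum_congr rfl hmid, Qf_k0 hk0, Qf_klast hk0, Pf_0k hk'0, Pf_lastk hk'0,
        ← Finset.mul_sum]
      have hgeom : (1/(4*(mC n)) * 2 + (mC n)⁻¹ *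
          (∑ j ∈ range (2*n-2), ((om n)^((k:ℕ)-1) / (om n)^((k':ℕ)-1))^(j+1))) + 1/(4*(mC n)) * 2
          = (mC n)⁻¹ * ∑ j ∈ range (2*n-1), ((om n)^((k:ℕ)-1) / (om n)^((k':ℕ)-1))^j := by
        rw [show 2*n-1 = (2*n-2)+1 by omega, Finset.sum_range_succ', pow_zero, mul_add, mul_one]
        field_simp
        ring
      rw [hgeom]
      by_cases hkk : (k:ℕ) = (k':ℕ)
      · rw [if_pos (Fin.ext hkk), hkk, div_self (pow_ne_zero _ hom)]
        simp only [one_pow, Finset.sum_const, Finset.card_range, nsmul_eq_mul, mul_one]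
        exact inv_mul_cancel₀ hmC
      · rw [if_neg (fun h => hkk (congrArg Fin.val h))]
        have htt' : (k:ℕ)-1 ≠ (k':ℕ)-1 := by omega
        have hzne : (om n)^((k:ℕ)-1) / (om n)^((k':ℕ)-1) ≠ 1 := by
          intro h
          rw [div_eq_one_iff_eq (pow_ne_zero _ hom)] at h
          exact htt' ((om_prim hn).pow_inj (by omega) (by omega) h)
        have hzm : ((om n)^((k:ℕ)-1) / (om n)^((k':ℕ)-1))^(2*n-1) = 1 := by
          rw [div_pow, pow_right_comm, om_pow_m hn, one_pow,
            pow_right_comm ((om n)) ((k':ℕ)-1), om_pow_m hn, one_pow, div_one]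
        rw [geo hn hzm hzne, mul_zero]


def Mf (n i j : ℕ) : ℂ :=
  if i = j + 1 then (if i = n then 2 else 1)
  else if i = 0 ∧ j = 2*n - 2 then 1
  else if i = 1 ∧ j = 2*n - 1 then 1
  else 0

def Mm (n : ℕ) : Matrix (Fin (2*n)) (Fin (2*n)) ℂ :=
  Matrix.of fun i j => Mf n (i:ℕ) (j:ℕ)

def dv (n : ℕ) : Fin (2*n) → ℂ := fun k => if (k:ℕ) = 0 then 0 else nu n ((k:ℕ)-1)

def Dm (n : ℕ) : Matrix (Fin (2*n)) (Fin (2*n)) ℂ := Matrix.diagonal (dv n)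

lemma Mf_row0 (hn : 2 ≤ n) {j : ℕ} (hj : j ≠ 2*n-2) : Mf n 0 j = 0 := by
  rw [Mf, if_neg (by omega), if_neg (by omega), if_neg (by omega)]
lemma Mf_row0' (hn : 2 ≤ n) : Mf n 0 (2*n-2) = 1 := by
  rw [Mf, if_neg (by omega), if_pos (by omega)]
lemma Mf_row1_0 (hn : 2 ≤ n) : Mf n 1 0 = 1 := by
  rw [Mf, if_pos rfl, if_neg (by omega)]
lemma Mf_row1_last (hn : 2 ≤ n) : Mf n 1 (2*n-1) = 1 := by
  rw [Mf, if_neg (by omega), if_neg (by omega), if_pos (by omega)]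
lemma Mf_row1_mid (hn : 2 ≤ n) {j : ℕ} (h0 : j ≠ 0) (h1 : j ≠ 2*n-1) : Mf n 1 j = 0 := by
  rw [Mf, if_neg (by omega), if_neg (by omega), if_neg (by omega)]
lemma Mf_rowi_ne {i j : ℕ} (hi : 2 ≤ i) (hj : j ≠ i - 1) : Mf n i j = 0 := by
  rw [Mf, if_neg (by omega), if_neg (by omega), if_neg (by omega)]
lemma Mf_rowi_eq {i : ℕ} (hi : 2 ≤ i) : Mf n i (i-1) = (if i = n then 2 else 1) := by
  rw [Mf, if_pos (by omega)]

lemma MP (hn : 2 ≤ n) : Mm n * Pm n = Pm n * Dm n := by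
  ext i k
  rw [Dm, Matrix.mul_diagonal, Matrix.mul_apply]
  simp only [Mm, Pm, Matrix.of_apply, dv]
  rw [Fin.sum_univ_eq_sum_range (fun j => Mf n (i:ℕ) j * Pf n j (k:ℕ)) (2*n)]
  have hI : (i:ℕ) < 2*n := i.2
  have hK : (k:ℕ) < 2*n := k.2
  by_cases hi0 : (i:ℕ) = 0
  · rw [hi0]
    rw [Finset.sum_eq_single_of_mem (2*n-2) (mem_range.mpr (by omega))
      (fun j hj hne => by rw [Mf_row0 hn hne, zero_mul])]
    rw [Mf_row0' hn, one_mul]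
    by_cases hk0 : (k:ℕ) = 0
    · rw [hk0, if_pos rfl, mul_zero, Pf_mid0 hn (by omega) (by omega)]
    · rw [if_neg hk0, Pf_midk hk0 (by omega) (by omega), Pf_0k hk0,
        if_pos (by omega : n ≤ 2*n-2), show 2*n-1-(2*n-2) = 1 by omega, pow_one]
  · by_cases hi1 : (i:ℕ) = 1
    · rw [hi1]
      have hs := split3 (fun j => Mf n 1 j * Pf n j (k:ℕ)) (2*n-2)
      rw [show (2*n-2)+2 = 2*n by omega, show (2*n-2)+1 = 2*n-1 by omega] at hs
      rw [hs]
      have hmid : ∀ j ∈ range (2*n-2), Mf n 1 (j+1) * Pf n (j+1) (k:ℕ) = 0 := by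
        intro j hj
        rw [mem_range] at hj
        rw [Mf_row1_mid hn (by omega) (by omega), zero_mul]
      rw [Finset.sum_congr rfl hmid, Finset.sum_const, smul_zero, add_zero,
        Mf_row1_0 hn, Mf_row1_last hn, one_mul, one_mul]
      by_cases hk0 : (k:ℕ) = 0
      · rw [hk0, if_pos rfl, mul_zero, Pf_00, Pf_last0 hn]
        norm_num
      · rw [if_neg hk0, Pf_0k hk0, Pf_lastk hk0, Pf_midk hk0 (by omega) (by omega),
          if_neg (by omega : ¬ n ≤ 1)]
        rw [one_mul, ← pow_succ, show 2*n-1-1+1 = 2*n-1 by omega, nu_pow_m hn]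
        norm_num
    · have hi2 : 2 ≤ (i:ℕ) := by omega
      rw [Finset.sum_eq_single_of_mem ((i:ℕ)-1) (mem_range.mpr (by omega))
        (fun j hj hne => by rw [Mf_rowi_ne hi2 hne, zero_mul])]
      rw [Mf_rowi_eq hi2]
      by_cases hk0 : (k:ℕ) = 0
      · rw [hk0, if_pos rfl, mul_zero, Pf_mid0 hn (by omega) (by omega), mul_zero]
      · rw [if_neg hk0]
        by_cases hilast : (i:ℕ) = 2*n-1
        · rw [hilast, show 2*n-1-1 = 2*n-2 by omega, Pf_midk hk0 (by omega) (by omega),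
            Pf_lastk hk0, if_neg (by omega : ¬ (2*n-1 = n)),
            if_pos (by omega : n ≤ 2*n-2), show 2*n-1-(2*n-2) = 1 by omega, pow_one]
          ring
        · rw [Pf_midk hk0 (by omega) (by omega), Pf_midk hk0 (by omega) hilast]
          rw [show 2*n-1-((i:ℕ)-1) = (2*n-1-(i:ℕ))+1 by omega, pow_succ]
          by_cases hin : (i:ℕ) = n
          · rw [if_pos hin, if_neg (by omega : ¬ n ≤ (i:ℕ)-1), if_pos (by omega : n ≤ (i:ℕ))]
            ring
          · by_cases hlt : (i:ℕ) < n
            · rw [if_neg hin, if_neg (by omega : ¬ n ≤ (i:ℕ)-1), if_neg (by omega : ¬ n ≤ (i:ℕ))]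
              ring
            · rw [if_neg hin, if_pos (by omega : n ≤ (i:ℕ)-1), if_pos (by omega : n ≤ (i:ℕ))]
              ring


lemma charpoly_conj {N : ℕ} (P B Q : Matrix (Fin N) (Fin N) ℂ)
    (h1 : P * Q = 1) : (P * B * Q).charpoly = B.charpoly := by
  have key : charmatrix (P * B * Q) = (P.map C) * charmatrix B * (Q.map C) := by
    rw [charmatrix, charmatrix, Matrix.mul_sub, Matrix.sub_mul]
    congr 1
    · have hc : Matrix.scalar (Fin N) (X : ℂ[X]) * Q.map C
          = Q.map C * Matrix.scalar (Fin N) (X : ℂ[X]) :=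
        (Matrix.scalar_commute _ (fun r' => Commute.all _ _) _)
      rw [mul_assoc, hc, ← mul_assoc, ← Matrix.map_mul, h1,
        Matrix.map_one _ (map_zero C) (map_one C), one_mul]
    · show C.mapMatrix (P * B * Q) = P.map ⇑C * C.mapMatrix B * Q.map ⇑C
      simp only [RingHom.mapMatrix_apply]
      rw [← Matrix.map_mul, ← Matrix.map_mul]
  rw [Matrix.charpoly, Matrix.charpoly, key, Matrix.det_mul, Matrix.det_mul]
  have h2 : P.map C * Q.map C = 1 := by
    rw [← Matrix.map_mul, h1, Matrix.map_one _ (map_zero C) (map_one C)]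
  calc (P.map ⇑C).det * B.charmatrix.det * (Q.map ⇑C).det
      = B.charmatrix.det * ((P.map ⇑C).det * (Q.map ⇑C).det) := by ring
    _ = B.charmatrix.det := by rw [← Matrix.det_mul, h2, Matrix.det_one, mul_one]

lemma conj_pow {N : ℕ} (P B Q : Matrix (Fin N) (Fin N) ℂ)
    (h1 : P * Q = 1) (h2 : Q * P = 1) (p : ℕ) : (P*B*Q)^p = P*B^p*Q := by
  induction p with
  | zero => rw [pow_zero, pow_zero, mul_one, h1]
  | succ p ih =>
      rw [pow_succ, ih, pow_succ]
      calc P * B ^ p * Q * (P * B * Q) = P * B ^ p * (Q * P) * B * Q := by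
            rw [← mul_assoc, ← mul_assoc, mul_assoc (P * B ^ p) Q P]
        _ = P * (B ^ p * B) * Q := by rw [h2, mul_one, mul_assoc P (B^p) B]

lemma charpoly_diag {N : ℕ} (w : Fin N → ℂ) :
    (Matrix.diagonal w).charpoly = ∏ i : Fin N, (X - C (w i)) := by
  rw [Matrix.charpoly_of_upperTriangular _ (Matrix.blockTriangular_diagonal w)]
  exact Finset.prod_congr rfl fun i _ => by rw [Matrix.diagonal_apply_eq]

lemma prod_periodic (g : ℕ → ℂ[X]) (m' : ℕ) (hper : ∀ j, g (j + m') = g j) (d : ℕ) :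
    ∏ j ∈ range (d * m'), g j = (∏ j ∈ range m', g j)^d := by
  induction d with
  | zero => simp
  | succ d ih =>
      have h1 : (d+1) * m' = d * m' + m' := by ring
      rw [h1, Finset.prod_range_add, ih, pow_succ]
      congr 1
      refine Finset.prod_congr rfl fun j hj => ?_
      have : ∀ c : ℕ, g (j + c * m') = g j := by
        intro c
        induction c with
        | zero => simp
        | succ c ihc => rw [show j + (c+1)*m' = (j + c*m') + m' by ring, hper, ihc]
      rw [show d * m' + j = j + d * m' by ring, this d]

theorem main (n p : ℕ) (hn2 : 2 ≤ n) (hp1 : n ≤ p) (hp2 : p ≤ 2*n - 2) :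
    ((2⁻¹ : ℂ) • (Mm n) ^ p).charpoly =
      X * (X ^ ((2*n - 1) / Nat.gcd p (2*n - 1)) -
        C ((2:ℂ) ^ ((2*p - (2*n - 1)) / Nat.gcd p (2*n - 1)))) ^ (Nat.gcd p (2*n - 1)) := by
  have hQP := QP hn2
  have hPQ : Pm n * Qm n = 1 := mul_eq_one_comm.mp hQP
  have hMconj : Mm n = Pm n * Dm n * Qm n := by
    calc Mm n = Mm n * (Pm n * Qm n) := by rw [hPQ, mul_one]
      _ = (Mm n * Pm n) * Qm n := by rw [mul_assoc]
      _ = (Pm n * Dm n) * Qm n := by rw [MP hn2]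
  -- gcd bookkeeping
  set d := Nat.gcd p (2*n-1) with hd
  have hdpos : 0 < d := Nat.gcd_pos_of_pos_right p (by omega)
  have hdvd_m : d ∣ 2*n-1 := Nat.gcd_dvd_right p (2*n-1)
  have hdvd_p : d ∣ p := Nat.gcd_dvd_left p (2*n-1)
  have hdvd_e : d ∣ 2*p - (2*n-1) := Nat.dvd_sub (Dvd.dvd.mul_left hdvd_p 2) hdvd_m
  obtain ⟨m', hm'⟩ := hdvd_m
  obtain ⟨e, he⟩ := hdvd_e
  obtain ⟨p', hp'⟩ := hdvd_p
  have hdivm : (2*n-1) / d = m' := by rw [hm', Nat.mul_div_cancel_left _ hdpos]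
  have hdive : (2*p - (2*n-1)) / d = e := by rw [he, Nat.mul_div_cancel_left _ hdpos]
  have hm'pos : 0 < m' := by
    rcases Nat.eq_zero_or_pos m' with h | h
    · exfalso; rw [h, mul_zero] at hm'; omega
    · exact h
  -- primitive root
  have hprim : IsPrimitiveRoot ((om n)^p) m' := by
    have h1 : IsPrimitiveRoot ((om n)^d) m' :=
      (om_prim hn2).pow (by omega) hm'
    have h2 : ((om n)^d)^p' = (om n)^p := by rw [← pow_mul, ← hp']
    have h3 : Nat.Coprime p' m' := by
      have := Nat.coprime_div_gcd_div_gcd (m := p) (n := 2*n-1) hdpos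
      rwa [← hd, hp', hm', Nat.mul_div_cancel_left _ hdpos, Nat.mul_div_cancel_left _ hdpos]
        at this
    rw [← h2]
    exact h1.pow_of_coprime p' h3
  -- diagonal entries
  set α : ℂ := (rr n : ℂ)^(2*p - (2*n-1)) with hα
  have hαm' : α^m' = (2:ℂ)^e := by
    rw [hα, ← pow_mul]
    have : (2*p - (2*n-1)) * m' = (2*n-1) * e := by
      rw [he, hm']; ring
    rw [this, pow_mul, rr_pow_m hn2]
  have hζm' : ((om n)^p)^m' = 1 := by
    rw [← pow_mul, show p * m' = (2*n-1) * p' by rw [hp', hm']; ring, pow_mul, om_pow_m hn2,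
      one_pow]
  -- compute the charpoly
  have step1 : ((2⁻¹ : ℂ) • (Mm n) ^ p) = Pm n * ((2⁻¹ : ℂ) • (Dm n)^p) * Qm n := by
    rw [hMconj, conj_pow _ _ _ hPQ hQP, mul_smul_comm, smul_mul_assoc]
  rw [step1, charpoly_conj _ _ _ hPQ]
  have step2 : ((2⁻¹ : ℂ) • (Dm n)^p) = Matrix.diagonal (fun k => (2⁻¹ : ℂ) * ((dv n k)^p)) := by
    rw [Dm, Matrix.diagonal_pow, ← Matrix.diagonal_smul]
    congr 1
  rw [step2, charpoly_diag]
  have hentry : ∀ K : ℕ, K < 2*n → (2⁻¹ : ℂ) * ((if K = 0 then 0 else nu n (K-1))^p)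
      = (if K = 0 then 0 else ((om n)^p)^(K-1) * α) := by
    intro K _
    by_cases hK0 : K = 0
    · rw [if_pos hK0, if_pos hK0, zero_pow (by omega : p ≠ 0), mul_zero]
    · rw [if_neg hK0, if_neg hK0, nu, mul_pow, ← pow_mul, pow_right_comm]
      have h2 : (rr n : ℂ)^(2*p) = α * 2 := by
        rw [hα, ← rr_pow_m hn2, ← pow_add,
          show (2*p - (2*n-1)) + (2*n-1) = 2*p by omega]
      rw [h2]
      ring
  have step3 : ∏ k : Fin (2*n), (X - C ((2⁻¹ : ℂ) * ((dv n k)^p)))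
      = (X - C 0) * ∏ K ∈ range (2*n-1), (X - C (((om n)^p)^K * α)) := by
    simp only [dv]
    rw [Fin.prod_univ_eq_prod_range
      (fun K => X - C ((2⁻¹ : ℂ) * ((if K = 0 then 0 else nu n (K-1))^p))) (2*n)]
    rw [show 2*n = (2*n-1)+1 by omega, Finset.prod_range_succ']
    rw [hentry 0 (by omega), if_pos rfl]
    rw [mul_comm]
    congr 1
    refine Finset.prod_congr rfl fun K hK => ?_
    rw [mem_range] at hK
    rw [hentry (K+1) (by omega), if_neg (by omega), Nat.add_sub_cancel]
  rw [step3, map_zero, sub_zero]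
  congr 1
  -- now the product identity
  rw [hdivm, hdive, show 2*n-1 = d * m' from hm']
  have hper : ∀ j, (fun K => X - C ((om n ^ p)^K * α)) (j + m')
      = (fun K => X - C ((om n ^ p)^K * α)) j := by
    intro j
    simp only
    rw [pow_add, hζm', mul_one]
  rw [prod_periodic _ m' hper d]
  congr 1
  exact (X_pow_sub_C_eq_prod hprim hm'pos hαm').symm

end
end OGAux

theorem charpoly_Mp_high (n p : ℕ) (hn : 1 ≤ n) (hp1 : n ≤ p) (hp2 : p ≤ 2*n - 2) :
    ((2⁻¹ : ℂ) • (M n) ^ p).charpoly =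
      X * (X ^ ((2*n - 1) / Nat.gcd p (2*n - 1)) -
        C ((2:ℂ) ^ ((2*p - (2*n - 1)) / Nat.gcd p (2*n - 1)))) ^ (Nat.gcd p (2*n - 1)) := by
  have hn2 : 2 ≤ n := by omega
  have hM : M n = OGAux.Mm n := rfl
  rw [hM]
  exact OGAux.main n p hn2 hp1 hp2
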